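/- Let A be a Banach algebra, f: A → A, and φ₁, φ₂: A × A → ℝ≥0 such that ‖f(xy) − f(x)f(y)‖ ≤ φ₁(x,y) and ‖f(2x+y) + f(2x−y) − 2f(x+y) − 2f(x−y) − 12f(x)‖ ≤ φ₂(x,y) for all x, y ∈ A. Assume Ψ(x,y) = Σ_{i=0}^∞ φ₂(2ⁱx, 2ⁱy)/2^{3i} converges for all x,y and lim_{n→∞} φ₁(2ⁿx, 2ⁿy)/2^{6n} = 0 for all x,y. Then there exists a unique map T: A → A satisfying T(xy) = T(x)T(y), T(2x+y) + T(2x−y) = 2T(x+y) + 2T(x−y) + 12T(x) for all x,y ∈ A, and ‖T(x) − f(x)‖ ≤ (1/16)Ψ(x, 0) for all x ∈ A. -/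

import Mathlib

open Filter Topology Finset

theorem cubic_homomorphism_stability
    {A : Type*} [NormedRing A] [NormedAlgebra ℝ A] [CompleteSpace A]
    (f : A → A) (φ₁ φ₂ : A → A → ℝ)
    (hφ₁ : ∀ x y, 0 ≤ φ₁ x y) (hφ₂ : ∀ x y, 0 ≤ φ₂ x y)
    (h1 : ∀ x y : A, ‖f (x * y) - f x * f y‖ ≤ φ₁ x y)
    (h2 : ∀ x y : A, ‖f ((2:ℝ) • x + y) + f ((2:ℝ) • x - y)
        - (2:ℝ) • f (x + y) - (2:ℝ) • f (x - y) - (12:ℝ) • f x‖ ≤ φ₂ x y)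
    (hΨ : ∀ x y : A,
      Summable (fun i : ℕ => φ₂ ((2:ℝ) ^ i • x) ((2:ℝ) ^ i • y) / 2 ^ (3 * i)))
    (hlim : ∀ x y : A, Filter.Tendsto
      (fun n : ℕ => φ₁ ((2:ℝ) ^ n • x) ((2:ℝ) ^ n • y) / 2 ^ (6 * n))
      Filter.atTop (nhds 0)) :
    ∃! T : A → A,
      (∀ x y : A, T (x * y) = T x * T y) ∧
      (∀ x y : A, T ((2:ℝ) • x + y) + T ((2:ℝ) • x - y)
        = (2:ℝ) • T (x + y) + (2:ℝ) • T (x - y) + (12:ℝ) • T x) ∧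
      (∀ x : A, ‖T x - f x‖ ≤ (1 / 16) * ∑' i : ℕ, φ₂ ((2:ℝ) ^ i • x) 0 / 2 ^ (3 * i)) := by
  classical
  -- powers of two
  have pow8 : ∀ n : ℕ, ((2:ℝ)) ^ (3 * n) = 8 ^ n := by
    intro n; rw [pow_mul]; norm_num
  have pow64 : ∀ n : ℕ, ((2:ℝ)) ^ (6 * n) = 8 ^ n * 8 ^ n := by
    intro n; rw [show 6 * n = 3 * n + 3 * n by ring, pow_add, pow8]
  have h8pos : ∀ n : ℕ, (0:ℝ) < 8 ^ n := fun n => by positivity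
  -- the approximating sequence
  set g : A → ℕ → A := fun x n => ((8:ℝ) ^ n)⁻¹ • f ((2:ℝ) ^ n • x) with hgdef
  -- key one-step estimate
  have key : ∀ x : A, ‖(8:ℝ)⁻¹ • f ((2:ℝ) • x) - f x‖ ≤ φ₂ x 0 / 16 := by
    intro x
    have h := h2 x 0
    simp only [add_zero, sub_zero] at h
    have e : f ((2:ℝ) • x) + f ((2:ℝ) • x) - (2:ℝ) • f x - (2:ℝ) • f x - (12:ℝ) • f x
        = (16:ℝ) • ((8:ℝ)⁻¹ • f ((2:ℝ) • x) - f x) := by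
      rw [smul_sub, smul_smul]; norm_num; module
    rw [e, norm_smul] at h
    simp only [Real.norm_eq_abs] at h
    rw [abs_of_nonneg (by norm_num : (0:ℝ) ≤ 16)] at h
    linarith
  -- increments
  have step : ∀ (x : A) (n : ℕ),
      dist (g x n) (g x (n + 1)) ≤ φ₂ ((2:ℝ) ^ n • x) 0 / 2 ^ (3 * n) / 16 := by
    intro x n
    have e : g x (n + 1) - g x n
        = ((8:ℝ) ^ n)⁻¹ • ((8:ℝ)⁻¹ • f ((2:ℝ) • ((2:ℝ) ^ n • x)) - f ((2:ℝ) ^ n • x)) := by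
      simp only [hgdef]
      rw [pow_succ, pow_succ, smul_smul, mul_comm ((2:ℝ)^n) 2, mul_inv]
      module
    rw [dist_eq_norm, norm_sub_rev, e, norm_smul]
    simp only [Real.norm_eq_abs, abs_inv, abs_of_nonneg (le_of_lt (h8pos n))]
    rw [pow8]
    calc ((8:ℝ) ^ n)⁻¹ * ‖(8:ℝ)⁻¹ • f ((2:ℝ) • ((2:ℝ) ^ n • x)) - f ((2:ℝ) ^ n • x)‖
        ≤ ((8:ℝ) ^ n)⁻¹ * (φ₂ ((2:ℝ) ^ n • x) 0 / 16) := by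
          exact mul_le_mul_of_nonneg_left (key _) (inv_nonneg.mpr (le_of_lt (h8pos n)))
      _ = φ₂ ((2:ℝ) ^ n • x) 0 / 8 ^ n / 16 := by ring
  -- the comparison series
  have hsum : ∀ x : A, Summable (fun n : ℕ => φ₂ ((2:ℝ) ^ n • x) 0 / 2 ^ (3 * n) / 16) := by
    intro x
    have := hΨ x 0
    simp only [smul_zero] at this
    exact this.div_const 16
  -- Cauchy and limit
  have hcauchy : ∀ x : A, CauchySeq (g x) :=
    fun x => cauchySeq_of_dist_le_of_summable _ (step x) (hsum x)
  choose T hT using fun x => cauchySeq_tendsto_of_complete (hcauchy x)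
  -- bound
  have hbound : ∀ x : A, ‖T x - f x‖ ≤ (1 / 16) * ∑' i : ℕ, φ₂ ((2:ℝ) ^ i • x) 0 / 2 ^ (3 * i) := by
    intro x
    have hb := dist_le_tsum_of_dist_le_of_tendsto₀ _ (step x) (hsum x) (hT x)
    have hg0 : g x 0 = f x := by simp [hgdef]
    rw [hg0, dist_eq_norm, norm_sub_rev] at hb
    calc ‖T x - f x‖ ≤ ∑' n : ℕ, φ₂ ((2:ℝ) ^ n • x) 0 / 2 ^ (3 * n) / 16 := hb
      _ = (1 / 16) * ∑' i : ℕ, φ₂ ((2:ℝ) ^ i • x) 0 / 2 ^ (3 * i) := by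
          rw [tsum_div_const]; ring
  -- the cubic equation for T
  have hcube : ∀ x y : A, T ((2:ℝ) • x + y) + T ((2:ℝ) • x - y)
      = (2:ℝ) • T (x + y) + (2:ℝ) • T (x - y) + (12:ℝ) • T x := by
    intro x y
    have hA : Tendsto (fun n => g ((2:ℝ) • x + y) n + g ((2:ℝ) • x - y) n
        - (2:ℝ) • g (x + y) n - (2:ℝ) • g (x - y) n - (12:ℝ) • g x n) atTop
        (𝓝 (T ((2:ℝ) • x + y) + T ((2:ℝ) • x - y)
        - (2:ℝ) • T (x + y) - (2:ℝ) • T (x - y) - (12:ℝ) • T x)) :=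
      ((((hT _).add (hT _)).sub ((hT _).const_smul (2:ℝ))).sub
        ((hT _).const_smul (2:ℝ))).sub ((hT x).const_smul (12:ℝ))
    have hB : Tendsto (fun n => g ((2:ℝ) • x + y) n + g ((2:ℝ) • x - y) n
        - (2:ℝ) • g (x + y) n - (2:ℝ) • g (x - y) n - (12:ℝ) • g x n) atTop (𝓝 0) := by
      apply squeeze_zero_norm (a := fun n => φ₂ ((2:ℝ) ^ n • x) ((2:ℝ) ^ n • y) / 2 ^ (3 * n))
      · intro n
        have e : g ((2:ℝ) • x + y) n + g ((2:ℝ) • x - y) n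
            - (2:ℝ) • g (x + y) n - (2:ℝ) • g (x - y) n - (12:ℝ) • g x n
            = ((8:ℝ) ^ n)⁻¹ • (f ((2:ℝ) • ((2:ℝ) ^ n • x) + (2:ℝ) ^ n • y)
              + f ((2:ℝ) • ((2:ℝ) ^ n • x) - (2:ℝ) ^ n • y)
              - (2:ℝ) • f ((2:ℝ) ^ n • x + (2:ℝ) ^ n • y)
              - (2:ℝ) • f ((2:ℝ) ^ n • x - (2:ℝ) ^ n • y)
              - (12:ℝ) • f ((2:ℝ) ^ n • x)) := by
          simp only [hgdef, smul_add, smul_sub, smul_smul, mul_comm ((2:ℝ)^n) 2]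
          module
        rw [e, norm_smul]
        simp only [Real.norm_eq_abs, abs_inv, abs_of_nonneg (le_of_lt (h8pos n))]
        have hrw : φ₂ ((2:ℝ) ^ n • x) ((2:ℝ) ^ n • y) / 2 ^ (3 * n)
            = ((8:ℝ) ^ n)⁻¹ * φ₂ ((2:ℝ) ^ n • x) ((2:ℝ) ^ n • y) := by
          rw [pow8]; ring
        rw [hrw]
        exact mul_le_mul_of_nonneg_left (h2 _ _) (inv_nonneg.mpr (le_of_lt (h8pos n)))
      · exact (hΨ x y).tendsto_atTop_zero
    have h0 := tendsto_nhds_unique hA hB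
    have : (T ((2:ℝ) • x + y) + T ((2:ℝ) • x - y))
        - ((2:ℝ) • T (x + y) + (2:ℝ) • T (x - y) + (12:ℝ) • T x) = 0 := by
      rw [← h0]; abel
    exact sub_eq_zero.mp this
  -- multiplicativity
  have hmul : ∀ x y : A, T (x * y) = T x * T y := by
    intro x y
    have h2n : Tendsto (fun n : ℕ => 2 * n) atTop atTop :=
      tendsto_atTop_atTop.mpr (fun b => ⟨b, fun a ha => by omega⟩)
    have hA : Tendsto (fun n => g (x * y) (2 * n) - g x n * g y n) atTop
        (𝓝 (T (x * y) - T x * T y)) :=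
      ((hT (x * y)).comp h2n).sub ((hT x).mul (hT y))
    have hB : Tendsto (fun n => g (x * y) (2 * n) - g x n * g y n) atTop (𝓝 0) := by
      apply squeeze_zero_norm (a := fun n => φ₁ ((2:ℝ) ^ n • x) ((2:ℝ) ^ n • y) / 2 ^ (6 * n))
      · intro n
        have e1 : ((2:ℝ) ^ n • x) * ((2:ℝ) ^ n • y) = (2:ℝ) ^ (2 * n) • (x * y) := by
          rw [smul_mul_smul_comm, ← pow_add, two_mul]
        have e : g (x * y) (2 * n) - g x n * g y n
            = ((8:ℝ) ^ (2 * n))⁻¹ • (f (((2:ℝ) ^ n • x) * ((2:ℝ) ^ n • y))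
              - f ((2:ℝ) ^ n • x) * f ((2:ℝ) ^ n • y)) := by
          simp only [hgdef, e1]
          rw [smul_sub, smul_mul_smul_comm, ← mul_inv, ← pow_add, two_mul]
        rw [e, norm_smul]
        simp only [Real.norm_eq_abs, abs_inv, abs_of_nonneg (le_of_lt (h8pos (2 * n)))]
        have hrw : φ₁ ((2:ℝ) ^ n • x) ((2:ℝ) ^ n • y) / 2 ^ (6 * n)
            = ((8:ℝ) ^ (2 * n))⁻¹ * φ₁ ((2:ℝ) ^ n • x) ((2:ℝ) ^ n • y) := by
          rw [pow64, show (8:ℝ) ^ (2*n) = 8 ^ n * 8 ^ n by rw [two_mul, pow_add]]; ring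
        rw [hrw]
        exact mul_le_mul_of_nonneg_left (h1 _ _) (inv_nonneg.mpr (le_of_lt (h8pos (2*n))))
      · exact hlim x y
    exact sub_eq_zero.mp (tendsto_nhds_unique hA hB)
  refine ⟨T, ⟨hmul, hcube, hbound⟩, ?_⟩
  -- uniqueness
  intro T' ⟨hm', hc', hb'⟩
  -- any solution of the cubic equation doubles by 8
  have dbl : ∀ S : A → A, (∀ x y : A, S ((2:ℝ) • x + y) + S ((2:ℝ) • x - y)
      = (2:ℝ) • S (x + y) + (2:ℝ) • S (x - y) + (12:ℝ) • S x) →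
      ∀ (n : ℕ) (x : A), S ((2:ℝ) ^ n • x) = (8:ℝ) ^ n • S x := by
    intro S hS
    have one : ∀ x : A, S ((2:ℝ) • x) = (8:ℝ) • S x := by
      intro x
      have h := hS x 0
      simp only [add_zero, sub_zero] at h
      have h16 : (2:ℝ) • S ((2:ℝ) • x) = (2:ℝ) • ((8:ℝ) • S x) := by
        rw [two_smul]; rw [h]; rw [smul_smul]; norm_num; module
      have := congrArg (fun z => (2:ℝ)⁻¹ • z) h16
      simpa [smul_smul] using this
    intro n
    induction n with
    | zero => simp
    | succ n ih =>
      intro x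
      rw [pow_succ, mul_smul, pow_succ, ih ((2:ℝ) • x), one, smul_smul, mul_comm]
  have dblT := dbl T hcube
  have dblT' := dbl T' hc'
  funext x
  -- tail sums tend to zero
  set u : ℕ → ℝ := fun i => φ₂ ((2:ℝ) ^ i • x) 0 / 2 ^ (3 * i) with hudef
  have hu : Summable u := by
    have := hΨ x 0; simp only [smul_zero] at this; exact this
  have htail : Tendsto (fun n : ℕ => ∑' i : ℕ, u (i + n)) atTop (𝓝 0) := by
    have heq : ∀ n : ℕ, ∑' i : ℕ, u (i + n) = (∑' i, u i) - ∑ i ∈ Finset.range n, u i := by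
      intro n
      have := Summable.sum_add_tsum_nat_add n hu
      linarith
    simp only [heq]
    have := (tendsto_const_nhds (x := ∑' i, u i) (f := atTop (α := ℕ))).sub hu.hasSum.tendsto_sum_nat
    simpa using this
  -- the key inequality
  have hineq : ∀ n : ℕ, ‖T' x - T x‖ ≤ (1 / 8) * ∑' i : ℕ, u (i + n) := by
    intro n
    have e : T' x - T x = ((8:ℝ) ^ n)⁻¹ • (T' ((2:ℝ) ^ n • x) - T ((2:ℝ) ^ n • x)) := by
      rw [dblT n x, dblT' n x, smul_sub, smul_smul, smul_smul,
        inv_mul_cancel₀ (ne_of_gt (h8pos n)), one_smul, one_smul]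
    have hsplit : ‖T' ((2:ℝ) ^ n • x) - T ((2:ℝ) ^ n • x)‖
        ≤ (1 / 16) * (∑' i : ℕ, φ₂ ((2:ℝ) ^ i • ((2:ℝ) ^ n • x)) 0 / 2 ^ (3 * i))
          + (1 / 16) * (∑' i : ℕ, φ₂ ((2:ℝ) ^ i • ((2:ℝ) ^ n • x)) 0 / 2 ^ (3 * i)) := by
      calc ‖T' ((2:ℝ) ^ n • x) - T ((2:ℝ) ^ n • x)‖
          ≤ ‖T' ((2:ℝ) ^ n • x) - f ((2:ℝ) ^ n • x)‖
            + ‖T ((2:ℝ) ^ n • x) - f ((2:ℝ) ^ n • x)‖ := by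
            rw [show T' ((2:ℝ) ^ n • x) - T ((2:ℝ) ^ n • x)
              = (T' ((2:ℝ) ^ n • x) - f ((2:ℝ) ^ n • x))
                - (T ((2:ℝ) ^ n • x) - f ((2:ℝ) ^ n • x)) by abel]
            exact norm_sub_le _ _
        _ ≤ _ := add_le_add (hb' _) (hbound _)
    have hΨshift : ((8:ℝ) ^ n)⁻¹ * (∑' i : ℕ, φ₂ ((2:ℝ) ^ i • ((2:ℝ) ^ n • x)) 0 / 2 ^ (3 * i))
        = ∑' i : ℕ, u (i + n) := by
      rw [← tsum_mul_left]
      refine tsum_congr (fun i => ?_)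
      have hsm : (2:ℝ) ^ i • ((2:ℝ) ^ n • x) = (2:ℝ) ^ (i + n) • x := by
        rw [smul_smul, ← pow_add]
      rw [hsm]
      show ((8:ℝ) ^ n)⁻¹ * (φ₂ ((2:ℝ) ^ (i+n) • x) 0 / 2 ^ (3 * i))
        = φ₂ ((2:ℝ) ^ (i+n) • x) 0 / 2 ^ (3 * (i + n))
      field_simp
      rw [← pow8 n]
      ring
    rw [e, norm_smul]
    simp only [Real.norm_eq_abs, abs_inv, abs_of_nonneg (le_of_lt (h8pos n))]
    calc ((8:ℝ) ^ n)⁻¹ * ‖T' ((2:ℝ) ^ n • x) - T ((2:ℝ) ^ n • x)‖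
        ≤ ((8:ℝ) ^ n)⁻¹ * ((1 / 16) * (∑' i : ℕ, φ₂ ((2:ℝ) ^ i • ((2:ℝ) ^ n • x)) 0 / 2 ^ (3 * i))
          + (1 / 16) * (∑' i : ℕ, φ₂ ((2:ℝ) ^ i • ((2:ℝ) ^ n • x)) 0 / 2 ^ (3 * i))) :=
          mul_le_mul_of_nonneg_left hsplit (inv_nonneg.mpr (le_of_lt (h8pos n)))
      _ = (1 / 8) * (((8:ℝ) ^ n)⁻¹
          * (∑' i : ℕ, φ₂ ((2:ℝ) ^ i • ((2:ℝ) ^ n • x)) 0 / 2 ^ (3 * i))) := by ring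
      _ = (1 / 8) * ∑' i : ℕ, u (i + n) := by rw [hΨshift]
  have hzero : ‖T' x - T x‖ ≤ 0 := by
    have hlim0 : Tendsto (fun n : ℕ => (1 / 8 : ℝ) * ∑' i : ℕ, u (i + n)) atTop (𝓝 0) := by
      simpa using htail.const_mul (1 / 8 : ℝ)
    exact ge_of_tendsto' hlim0 hineq
  have : T' x - T x = 0 := norm_le_zero_iff.mp hzero
  exact sub_eq_zero.mp this
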